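/- If L is a deterministic guarded language over (Σ₀, T₀), and (𝔰, 𝔱) is a guarded language morphism with 𝔰(p) deterministic for every p ∈ Σ₀, then apply^𝔰_𝔱(L) is a deterministic guarded language. -/
import Mathlib


/-- A guarded string candidate: a list of atoms (sets of tests) and actions. -/
abbrev GList (A T : Type) := List (Set T ⊕ A)

/-- Guarded strings: nonempty alternating sequences starting and ending with an atom. -/
inductive IsGuarded {A T : Type} : GList A T → Prop
  | single (α : Set T) : IsGuarded [Sum.inl α]
  | cons (α : Set T) (p : A) {l : GList A T} : IsGuarded l →
      IsGuarded (Sum.inl α :: Sum.inr p :: l)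

/-- Guarded composition of guarded languages: fuse matching boundary atoms. -/
def gcomp {A T : Type} (L K : Set (GList A T)) : Set (GList A T) :=
  { z | ∃ (w : GList A T) (α : Set T) (x : GList A T),
      w ++ [Sum.inl α] ∈ L ∧ Sum.inl α :: x ∈ K ∧ z = w ++ Sum.inl α :: x }

/-- The language of all length-one guarded strings (all atoms). -/
def atomsLang {A T : Type} : Set (GList A T) := { w | ∃ α : Set T, w = [Sum.inl α] }

/-- Iterated guarded composition. -/
def gpow {A T : Type} (L : Set (GList A T)) : ℕ → Set (GList A T)
  | 0 => atomsLang
  | n + 1 => gcomp L (gpow L n)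

/-- Guarded star. -/
def gstar {A T : Type} (L : Set (GList A T)) : Set (GList A T) := ⋃ n, gpow L n

/-- Boolean (test) expressions over test variables T. -/
inductive BExp (T : Type) where
  | tru : BExp T
  | fls : BExp T
  | var (t : T) : BExp T
  | or (b c : BExp T) : BExp T
  | and (b c : BExp T) : BExp T
  | not (b : BExp T) : BExp T

/-- Satisfaction of a test by an atom (truth assignment). -/
def BExp.holds {T : Type} (α : Set T) : BExp T → Prop
  | .tru => True
  | .fls => False
  | .var t => t ∈ α
  | .or b c => BExp.holds α b ∨ BExp.holds α c
  | .and b c => BExp.holds α b ∧ BExp.holds α c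
  | .not b => ¬ BExp.holds α b

/-- The guarded language of a test. -/
def testLang {A T : Type} (b : BExp T) : Set (GList A T) :=
  { w | ∃ α : Set T, b.holds α ∧ w = [Sum.inl α] }

/-- KAT expressions over actions A and tests T. -/
inductive KExp (A T : Type) where
  | test (b : BExp T) : KExp A T
  | act (p : A) : KExp A T
  | plus (e f : KExp A T) : KExp A T
  | seq (e f : KExp A T) : KExp A T
  | star (e : KExp A T) : KExp A T

/-- Language semantics of KAT. -/
def lang {A T : Type} : KExp A T → Set (GList A T)
  | .test b => testLang b
  | .act p => { w | ∃ α β : Set T, w = [Sum.inl α, Sum.inr p, Sum.inl β] }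
  | .plus e f => lang e ∪ lang f
  | .seq e f => gcomp (lang e) (lang f)
  | .star e => gstar (lang e)

/-- Semantics of a test under a valuation τ on states S. -/
def bsem {T S : Type} (τ : T → Set S) : BExp T → Set S
  | .tru => Set.univ
  | .fls => ∅
  | .var t => τ t
  | .or b c => bsem τ b ∪ bsem τ c
  | .and b c => bsem τ b ∩ bsem τ c
  | .not b => (bsem τ b)ᶜ

/-- Relational semantics of KAT under an interpretation (S, τ, σ). -/
def rsem {A T S : Type} (τ : T → Set S) (σ : A → S → S → Prop) : KExp A T → S → S → Prop
  | .test b => fun s s' => s = s' ∧ s ∈ bsem τ b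
  | .act p => σ p
  | .plus e f => fun s s' => rsem τ σ e s s' ∨ rsem τ σ f s s'
  | .seq e f => fun s s' => ∃ s'', rsem τ σ e s s'' ∧ rsem τ σ f s'' s'
  | .star e => Relation.ReflTransGen (rsem τ σ e)

/-- A relation is a partial function. -/
def Functional {S : Type} (r : S → S → Prop) : Prop :=
  ∀ s s₁ s₂, r s s₁ → r s s₂ → s₁ = s₂

/-- A KAT expression is deterministic: it maps functional interpretations to functional relations. -/
def DetExp {A T : Type} (e : KExp A T) : Prop :=
  ∀ (S : Type) (τ : T → Set S) (σ : A → S → S → Prop),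
    (∀ p, Functional (σ p)) → Functional (rsem τ σ e)

/-- A guarded language is deterministic: no member is a proper prefix of another, and
any two distinct members first differ at an atom. -/
def DetLang {A T : Type} (L : Set (GList A T)) : Prop :=
  ∀ w ∈ L, ∀ x ∈ L, w ≠ x →
    ∃ (l w' x' : GList A T) (α β : Set T), α ≠ β ∧
      w = l ++ Sum.inl α :: w' ∧ x = l ++ Sum.inl β :: x'

/-- The atom of a state: the set of tests true at it. -/
def atomOf {T S : Type} (τ : T → Set S) (s : S) : Set T := { t | s ∈ τ t }

/-- Labeled paths in an interpretation, together with their induced guarded strings. -/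
inductive IsPath {A T S : Type} (τ : T → Set S) (σ : A → S → S → Prop) :
    S → GList A T → S → Prop
  | nil (s : S) : IsPath τ σ s [Sum.inl (atomOf τ s)] s
  | cons {s s' s'' : S} {p : A} {w : GList A T} :
      σ p s s' → IsPath τ σ s' w s'' →
      IsPath τ σ s (Sum.inl (atomOf τ s) :: Sum.inr p :: w) s''

/-- GKAT expressions. -/
inductive GExp (A T : Type) where
  | assert (b : BExp T) : GExp A T
  | act (p : A) : GExp A T
  | seq (e f : GExp A T) : GExp A T
  | ite (b : BExp T) (e f : GExp A T) : GExp A T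
  | whl (b : BExp T) (e : GExp A T) : GExp A T

/-- Language semantics of GKAT. -/
def glang {A T : Type} : GExp A T → Set (GList A T)
  | .assert b => testLang b
  | .act p => { w | ∃ α β : Set T, w = [Sum.inl α, Sum.inr p, Sum.inl β] }
  | .seq e f => gcomp (glang e) (glang f)
  | .ite b e f => gcomp (testLang b) (glang e) ∪ gcomp (testLang b.not) (glang f)
  | .whl b e => gcomp (gstar (gcomp (testLang b) (glang e))) (testLang b.not)

/-- Output of a deterministic KAT automaton on a state and atom. -/
inductive Out (A Q : Type) where
  | accept : Out A Q
  | reject : Out A Q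
  | step (p : A) (q : Q) : Out A Q

/-- Acceptance in a deterministic KAT automaton with transition function δ,
starting from dynamics γ. -/
inductive AccFrom {A T Q : Type} (δ : Q → Set T → Out A Q) :
    (Set T → Out A Q) → GList A T → Prop
  | accept {γ : Set T → Out A Q} {α : Set T} :
      γ α = Out.accept → AccFrom δ γ [Sum.inl α]
  | step {γ : Set T → Out A Q} {α : Set T} {p : A} {q : Q} {w : GList A T} :
      γ α = Out.step p q → AccFrom δ (δ q) w →
      AccFrom δ γ (Sum.inl α :: Sum.inr p :: w)

/-- Brzozowski derivative of a language with respect to a word. -/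
def dl {A T : Type} (L : Set (GList A T)) (u : GList A T) : Set (GList A T) :=
  { x | u ++ x ∈ L }

/-- An atom β over T₁ is 𝔱-consistent with an atom α over T₀. -/
def TConsistent {T₀ T₁ : Type} (𝔱 : T₀ → BExp T₁) (α : Set T₀) (β : Set T₁) : Prop :=
  ∀ t, t ∈ α ↔ (𝔱 t).holds β

/-- Atom-replacement relation induced by a test substitution 𝔱. -/
inductive TRel {A T₀ T₁ : Type} (𝔱 : T₀ → BExp T₁) : GList A T₀ → GList A T₁ → Prop
  | nil : TRel 𝔱 [] []
  | atom {α : Set T₀} {β : Set T₁} {w : GList A T₀} {x : GList A T₁} :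
      TConsistent 𝔱 α β → TRel 𝔱 w x → TRel 𝔱 (Sum.inl α :: w) (Sum.inl β :: x)
  | act {p : A} {w : GList A T₀} {x : GList A T₁} :
      TRel 𝔱 w x → TRel 𝔱 (Sum.inr p :: w) (Sum.inr p :: x)

/-- apply_𝔱 on guarded languages. -/
def applyT {A T₀ T₁ : Type} (𝔱 : T₀ → BExp T₁) (L : Set (GList A T₀)) : Set (GList A T₁) :=
  { x | ∃ w ∈ L, TRel 𝔱 w x }

/-- Action-replacement relation induced by an action substitution 𝔰: each action is
replaced by a guarded string of 𝔰(p), fused with the surrounding atoms. -/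
inductive SRel {A₀ A₁ T : Type} (𝔰 : A₀ → Set (GList A₁ T)) :
    GList A₀ T → GList A₁ T → Prop
  | single (α : Set T) : SRel 𝔰 [Sum.inl α] [Sum.inl α]
  | step {α β : Set T} {p : A₀} {u : GList A₁ T} {w : GList A₀ T} {x : GList A₁ T} :
      Sum.inl α :: u ++ [Sum.inl β] ∈ 𝔰 p →
      SRel 𝔰 (Sum.inl β :: w) (Sum.inl β :: x) →
      SRel 𝔰 (Sum.inl α :: Sum.inr p :: Sum.inl β :: w) (Sum.inl α :: u ++ Sum.inl β :: x)

/-- apply^𝔰 on guarded languages. -/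
def applyS {A₀ A₁ T : Type} (𝔰 : A₀ → Set (GList A₁ T)) (L : Set (GList A₀ T)) :
    Set (GList A₁ T) :=
  { x | ∃ w ∈ L, SRel 𝔰 w x }

/-- Builder for the guarded strings of the language L_k. -/
def buildLk {k : ℕ} : Fin k → Fin k → List (Fin k) → GList (Fin k) (Fin k)
  | cur, act, [] => [Sum.inl {cur}, Sum.inr act, Sum.inl {cur}]
  | cur, act, j :: rest => Sum.inl {cur} :: Sum.inr act :: buildLk j cur rest

/-- The language L_k of Definition 6.2. -/
def Lk (k : ℕ) (hk : 0 < k) : Set (GList (Fin k) (Fin k)) :=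
  { w | ∃ (i : Fin k) (rest : List (Fin k)),
      i ≠ ⟨0, hk⟩ ∧ List.Chain' (· ≠ ·) (i :: rest) ∧ w = buildLk i ⟨0, hk⟩ rest }

/-- k-density of a deterministic KAT automaton transition function. -/
def KDense {A T Q : Type} (δ : Q → Set T → Out A Q) (k : ℕ) : Prop :=
  ∃ (S : Fin k → Set Q) (α : Fin k → Set T) (pa : Q → Fin k → A),
    Function.Injective α ∧
    (∀ i, (S i).Nonempty) ∧
    (∀ i q, q ∈ S i → δ q (α i) = Out.accept) ∧
    (∀ i j q, i ≠ j → q ∈ S i → ∃ q' ∈ S j, δ q (α j) = Out.step (pa q j) q') ∧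
    (∀ i j m q q', q ∈ S i → q' ∈ S j → pa q m = pa q' m → i = j)

/-- The sequence of actions occurring in a guarded string. -/
def actsOf {A T : Type} (w : GList A T) : List A :=
  w.filterMap (fun x => match x with | .inl _ => none | .inr p => some p)

/-- The guarded language of a word over Σ: all guarded strings with that action sequence. -/
def wordLang {A T : Type} (ps : List A) : Set (GList A T) :=
  { w | IsGuarded w ∧ actsOf w = ps }

/-- Test expressions without test variables. -/
def BExp.varFree {T : Type} : BExp T → Prop
  | .tru => True
  | .fls => True
  | .var _ => False
  | .or b c => BExp.varFree b ∧ BExp.varFree c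
  | .and b c => BExp.varFree b ∧ BExp.varFree c
  | .not b => BExp.varFree b

/-- KA expressions: KAT expressions with no test variables. -/
def KExp.testFree {A T : Type} : KExp A T → Prop
  | .test b => b.varFree
  | .act _ => True
  | .plus e f => KExp.testFree e ∧ KExp.testFree f
  | .seq e f => KExp.testFree e ∧ KExp.testFree f
  | .star e => KExp.testFree e

section MyAux

/-- The "first difference at an atom" predicate, matching the conclusion of `DetLang`. -/
def MyDiff {A T : Type} (w x : GList A T) : Prop :=
  ∃ (l w' x' : GList A T) (α β : Set T), α ≠ β ∧
    w = l ++ Sum.inl α :: w' ∧ x = l ++ Sum.inl β :: x'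

lemma myDiff_prepend {A T : Type} (c : GList A T) {a b : GList A T}
    (h : MyDiff a b) : MyDiff (c ++ a) (c ++ b) := by
  obtain ⟨l, w', x', α, β, hne, e1, e2⟩ := h
  exact ⟨c ++ l, w', x', α, β, hne, by simp [e1], by simp [e2]⟩

lemma myDiff_append {A T : Type} {a b : GList A T} (r₁ r₂ : GList A T)
    (h : MyDiff a b) : MyDiff (a ++ r₁) (b ++ r₂) := by
  obtain ⟨l, w', x', α, β, hne, e1, e2⟩ := h
  exact ⟨l, w' ++ r₁, x' ++ r₂, α, β, hne, by simp [e1], by simp [e2]⟩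

lemma tcons_inj {T₀ T₁ : Type} {𝔱 : T₀ → BExp T₁} {α α' : Set T₀} {β : Set T₁}
    (h1 : TConsistent 𝔱 α β) (h2 : TConsistent 𝔱 α' β) : α = α' := by
  ext t; exact (h1 t).trans (h2 t).symm

lemma srel_head {A₀ A₁ T : Type} {𝔰 : A₀ → Set (GList A₁ T)} {δ : Set T}
    {w : GList A₀ T} {y : GList A₁ T} (h : SRel 𝔰 (Sum.inl δ :: w) y) :
    ∃ y', y = Sum.inl δ :: y' := by
  cases h with
  | single => exact ⟨[], rfl⟩
  | step hmem hsub => exact ⟨_, rfl⟩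

lemma last_ne {A T : Type} {a b : GList A T} {x y : Set T ⊕ A} (h : x ≠ y) :
    a ++ [x] ≠ b ++ [y] := by
  intro he
  have := congrArg List.getLast? he
  simp [List.getLast?_concat] at this
  exact h this

lemma trel_det {A T₀ T₁ : Type} {𝔱 : T₀ → BExp T₁}
    {w₁ : GList A T₀} {x₁ : GList A T₁} (h1 : TRel 𝔱 w₁ x₁) :
    ∀ {w₂ : GList A T₀} {x₂ : GList A T₁}, TRel 𝔱 w₂ x₂ →
      ((w₁ = w₂ ∧ x₁ ≠ x₂) ∨ MyDiff w₁ w₂) → MyDiff x₁ x₂ := by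
  induction h1 with
  | nil =>
    intro w₂ x₂ h2 hcase
    rcases hcase with ⟨heq, hne⟩ | ⟨l, r₁, r₂, γ, γ', hγ, e1, e2⟩
    · subst heq; cases h2; exact absurd rfl hne
    · cases l <;> simp at e1
  | @atom α β w x hcons hrel ih =>
    intro w₂ x₂ h2 hcase
    rcases hcase with ⟨heq, hne⟩ | ⟨l, r₁, r₂, γ, γ', hγ, e1, e2⟩
    · subst heq
      cases h2 with
      | @atom _ β₂ _ x₂' hcons₂ hrel₂ =>
        by_cases hb : β = β₂
        · subst hb
          have hx : x ≠ x₂' := fun h => hne (by rw [h])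
          have := ih hrel₂ (Or.inl ⟨rfl, hx⟩)
          exact myDiff_prepend [Sum.inl β] this
        · exact ⟨[], x, x₂', β, β₂, hb, rfl, rfl⟩
    · cases l with
      | nil =>
        simp only [List.nil_append, List.cons.injEq, Sum.inl.injEq] at e1
        obtain ⟨hαγ, hwr⟩ := e1
        subst e2
        cases h2 with
        | @atom _ β₂ _ x₂' hcons₂ hrel₂ =>
          have hb : β ≠ β₂ := by
            intro hb; subst hb
            exact hγ (hαγ ▸ tcons_inj hcons hcons₂)
          exact ⟨[], x, x₂', β, β₂, hb, rfl, rfl⟩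
      | cons a l' =>
        simp only [List.cons_append, List.cons.injEq] at e1
        obtain ⟨ha, hw⟩ := e1
        subst ha
        subst e2
        cases h2 with
        | @atom _ β₂ _ x₂' hcons₂ hrel₂ =>
          by_cases hb : β = β₂
          · subst hb
            have := ih hrel₂ (Or.inr ⟨l', r₁, r₂, γ, γ', hγ, hw, rfl⟩)
            exact myDiff_prepend [Sum.inl β] this
          · exact ⟨[], x, x₂', β, β₂, hb, rfl, rfl⟩
  | @act p w x hrel ih =>
    intro w₂ x₂ h2 hcase
    rcases hcase with ⟨heq, hne⟩ | ⟨l, r₁, r₂, γ, γ', hγ, e1, e2⟩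
    · subst heq
      cases h2 with
      | @act _ _ x₂' hrel₂ =>
        have hx : x ≠ x₂' := fun h => hne (by rw [h])
        exact myDiff_prepend [Sum.inr p] (ih hrel₂ (Or.inl ⟨rfl, hx⟩))
    · cases l with
      | nil => simp at e1
      | cons a l' =>
        simp only [List.cons_append, List.cons.injEq] at e1
        obtain ⟨ha, hw⟩ := e1
        subst ha
        subst e2
        cases h2 with
        | @act _ _ x₂' hrel₂ =>
          exact myDiff_prepend [Sum.inr p]
            (ih hrel₂ (Or.inr ⟨l', r₁, r₂, γ, γ', hγ, hw, rfl⟩))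

lemma srel_det {A₀ A₁ T : Type} {𝔰 : A₀ → Set (GList A₁ T)} (h𝔰 : ∀ p, DetLang (𝔰 p))
    {v₁ : GList A₀ T} {y₁ : GList A₁ T} (h1 : SRel 𝔰 v₁ y₁) :
    ∀ {v₂ : GList A₀ T} {y₂ : GList A₁ T}, SRel 𝔰 v₂ y₂ →
      ((v₁ = v₂ ∧ y₁ ≠ y₂) ∨ MyDiff v₁ v₂) → MyDiff y₁ y₂ := by
  induction h1 with
  | single α =>
    intro v₂ y₂ h2 hcase
    rcases hcase with ⟨heq, hne⟩ | ⟨l, r₁, r₂, γ, γ', hγ, e1, e2⟩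
    · subst heq; cases h2; exact absurd rfl hne
    · cases l with
      | nil =>
        simp only [List.nil_append, List.cons.injEq, Sum.inl.injEq] at e1
        obtain ⟨hαγ, -⟩ := e1
        subst e2
        obtain ⟨y', rfl⟩ := srel_head h2
        exact ⟨[], [], y', α, γ', hαγ ▸ hγ, rfl, rfl⟩
      | cons a l' => simp only [List.cons_append, List.cons.injEq] at e1
                     obtain ⟨-, hw⟩ := e1
                     cases l' <;> simp at hw
  | @step α β p u w x hmem hsub ih =>
    intro v₂ y₂ h2 hcase
    rcases hcase with ⟨heq, hne⟩ | ⟨l, r₁, r₂, γ, γ', hγ, e1, e2⟩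
    · subst heq
      cases h2 with
      | @step _ _ _ u₂ _ x₂ hmem₂ hsub₂ =>
        by_cases hu : u = u₂
        · subst hu
          have hx : Sum.inl β :: x ≠ Sum.inl β :: x₂ := by
            intro h; apply hne
            injection h with _ h'
            rw [h']
          have := ih hsub₂ (Or.inl ⟨rfl, hx⟩)
          have h' := myDiff_prepend (Sum.inl α :: u) this
          simpa using h'
        · have hs : Sum.inl α :: u ++ [Sum.inl β] ≠ Sum.inl α :: u₂ ++ [Sum.inl β] := by
            intro h
            apply hu
            have h' : (Sum.inl α :: u) ++ [Sum.inl β] = (Sum.inl α :: u₂) ++ [Sum.inl β] := by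
              simpa using h
            have := List.append_cancel_right h'
            exact (List.cons.injEq _ _ _ _ ▸ this).2
          have hd : MyDiff (Sum.inl α :: u ++ [Sum.inl β]) (Sum.inl α :: u₂ ++ [Sum.inl β]) :=
            h𝔰 p _ hmem _ hmem₂ hs
          have := myDiff_append x x₂ hd
          simpa using this
    · -- Diff case
      cases l with
      | nil =>
        simp only [List.nil_append, List.cons.injEq, Sum.inl.injEq] at e1
        obtain ⟨hαγ, -⟩ := e1
        subst e2
        obtain ⟨y', rfl⟩ := srel_head h2
        exact ⟨[], _, y', α, γ', hαγ ▸ hγ, rfl, rfl⟩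
      | cons a l₀ =>
        simp only [List.cons_append, List.cons.injEq] at e1
        obtain ⟨rfl, e1⟩ := e1
        cases l₀ with
        | nil => simp at e1
        | cons b l' =>
          simp only [List.cons_append, List.cons.injEq] at e1
          obtain ⟨rfl, e1⟩ := e1
          cases l' with
          | nil =>
            simp only [List.nil_append, List.cons.injEq, Sum.inl.injEq] at e1
            obtain ⟨hβγ, rfl⟩ := e1
            subst hβγ
            subst e2
            cases h2 with
            | @step _ _ _ u₂ _ x₂ hmem₂ hsub₂ =>
              have hs : Sum.inl α :: u ++ [Sum.inl β] ≠ Sum.inl α :: u₂ ++ [Sum.inl γ'] := by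
                have : (Sum.inl α :: u) ++ [Sum.inl (β : Set T)] ≠
                    (Sum.inl α :: u₂) ++ [Sum.inl (γ' : Set T)] :=
                  last_ne (by simpa using hγ)
                simpa using this
              have hd : MyDiff (Sum.inl α :: u ++ [Sum.inl β]) (Sum.inl α :: u₂ ++ [Sum.inl γ']) :=
                h𝔰 p _ hmem _ hmem₂ hs
              have := myDiff_append x x₂ hd
              simpa using this
          | cons c l'' =>
            simp only [List.cons_append, List.cons.injEq] at e1
            obtain ⟨rfl, rfl⟩ := e1
            subst e2
            cases h2 with
            | @step _ _ _ u₂ _ x₂ hmem₂ hsub₂ =>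
              by_cases hu : u = u₂
              · subst hu
                have hd : MyDiff (Sum.inl β :: (l'' ++ Sum.inl γ :: r₁))
                    (Sum.inl β :: (l'' ++ Sum.inl γ' :: r₂)) :=
                  ⟨Sum.inl β :: l'', r₁, r₂, γ, γ', hγ, rfl, rfl⟩
                have := ih hsub₂ (Or.inr hd)
                have h' := myDiff_prepend (Sum.inl α :: u) this
                simpa using h'
              · have hs : Sum.inl α :: u ++ [Sum.inl β] ≠ Sum.inl α :: u₂ ++ [Sum.inl β] := by
                  intro h
                  apply hu
                  have h' : (Sum.inl α :: u) ++ [Sum.inl β] = (Sum.inl α :: u₂) ++ [Sum.inl β] := by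
                    simpa using h
                  have := List.append_cancel_right h'
                  exact (List.cons.injEq _ _ _ _ ▸ this).2
                have hd : MyDiff (Sum.inl α :: u ++ [Sum.inl β]) (Sum.inl α :: u₂ ++ [Sum.inl β]) :=
                  h𝔰 p _ hmem _ hmem₂ hs
                have := myDiff_append x x₂ hd
                simpa using this

end MyAux

/-- applying a guarded language morphism with deterministic action images
to a deterministic guarded language yields a deterministic guarded language. -/
theorem apply_preserves_det {A₀ A₁ T₀ T₁ : Type} (L : Set (GList A₀ T₀))
    (𝔰 : A₀ → Set (GList A₁ T₁)) (𝔱 : T₀ → BExp T₁)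
    (hLg : ∀ w ∈ L, IsGuarded w) (h𝔰g : ∀ p, ∀ w ∈ 𝔰 p, IsGuarded w)
    (hL : DetLang L) (h𝔰 : ∀ p, DetLang (𝔰 p)) :
    DetLang (applyS 𝔰 (applyT 𝔱 L)) := by
  intro y₁ hy₁ y₂ hy₂ hne
  obtain ⟨v₁, ⟨w₁, hw₁, ht₁⟩, hs₁⟩ := hy₁
  obtain ⟨v₂, ⟨w₂, hw₂, ht₂⟩, hs₂⟩ := hy₂
  by_cases hv : v₁ = v₂
  · exact srel_det h𝔰 hs₁ hs₂ (Or.inl ⟨hv, hne⟩)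
  · by_cases hw : w₁ = w₂
    · exact srel_det h𝔰 hs₁ hs₂ (Or.inr (trel_det ht₁ ht₂ (Or.inl ⟨hw, hv⟩)))
    · exact srel_det h𝔰 hs₁ hs₂
        (Or.inr (trel_det ht₁ ht₂ (Or.inr (hL w₁ hw₁ w₂ hw₂ hw))))
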